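/- For every natural number M ≥ 2, letting d := √((M − 2)/(2(M − 1))), one has (2/π) ∫_{ℝ²} e^{−2M(x² + y²)} · |1 + 8(M − 1)(x² + y²)·(M(x² + y²) − 1)| dx dy = 1/M − (16(M − 1)/(e·M²))·sinh(d) + (8·√(2(M − 2)(M − 1))/(e·M²))·cosh(d). -/

import Mathlib

open MeasureTheory Set Filter Real

set_option maxHeartbeats 1000000

/-- **Absolute Wigner volume of the two-excitation Dicke state `|D₂^M⟩` on the
diagonal slice.** For `M ≥ 2`, with `d = √((M−2)/(2(M−1)))`,
`(2/π) ∫_{ℝ²} e^{−2M(x²+y²)} |1 + 8(M−1)(x²+y²)(M(x²+y²) − 1)| dx dy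
  = 1/M − (16(M−1)/(e M²)) sinh d + (8√(2(M−2)(M−1))/(e M²)) cosh d`. -/
theorem stmt9 (M : ℕ) (hM : 2 ≤ M) :
    (2 / Real.pi) * ∫ p : ℝ × ℝ,
        Real.exp (-(2 * (M : ℝ) * (p.1 ^ 2 + p.2 ^ 2))) *
          |1 + 8 * ((M : ℝ) - 1) * (p.1 ^ 2 + p.2 ^ 2) *
            ((M : ℝ) * (p.1 ^ 2 + p.2 ^ 2) - 1)| =
      1 / (M : ℝ)
        - (16 * ((M : ℝ) - 1) / (Real.exp 1 * (M : ℝ) ^ 2)) *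
            Real.sinh (Real.sqrt (((M : ℝ) - 2) / (2 * ((M : ℝ) - 1))))
        + (8 * Real.sqrt (2 * ((M : ℝ) - 2) * ((M : ℝ) - 1)) / (Real.exp 1 * (M : ℝ) ^ 2)) *
            Real.cosh (Real.sqrt (((M : ℝ) - 2) / (2 * ((M : ℝ) - 1)))) := by
  set m : ℝ := (M : ℝ) with hm
  have hm2 : (2:ℝ) ≤ m := by rw [hm]; exact_mod_cast hM
  have hm0 : (0:ℝ) < m := by linarith
  have hm0' : m ≠ 0 := hm0.ne'
  have hm1 : (0:ℝ) < m - 1 := by linarith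
  have hm1' : m - 1 ≠ 0 := hm1.ne'
  have hm2' : (0:ℝ) ≤ m - 2 := by linarith
  set d : ℝ := Real.sqrt ((m - 2) / (2 * (m - 1))) with hd
  have hdarg : (0:ℝ) ≤ (m - 2) / (2 * (m - 1)) := div_nonneg hm2' (by linarith)
  have hd0 : 0 ≤ d := Real.sqrt_nonneg _
  have hdsq : d ^ 2 = (m - 2) / (2 * (m - 1)) := Real.sq_sqrt hdarg
  have hd2 : 2 * (m - 1) * d ^ 2 = m - 2 := by rw [hdsq]; field_simp
  have hd1 : d ≤ 1 := by
    have h1 : (m-2)/(2*(m-1)) ≤ 1 := by rw [div_le_one (by linarith)]; linarith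
    calc d ≤ Real.sqrt 1 := Real.sqrt_le_sqrt h1
    _ = 1 := Real.sqrt_one
  -- roots of the quadratic in u = r^2
  set t₁ : ℝ := (1 - d) / (2 * m) with ht₁
  set t₂ : ℝ := (1 + d) / (2 * m) with ht₂
  have ht₁0 : 0 ≤ t₁ := div_nonneg (by linarith) (by linarith)
  have ht₂0 : 0 < t₂ := div_pos (by linarith) (by linarith)
  have ht₁₂ : t₁ ≤ t₂ := by
    apply div_le_div_of_nonneg_right (by linarith) (by linarith)
  set r₁ : ℝ := Real.sqrt t₁ with hr₁
  set r₂ : ℝ := Real.sqrt t₂ with hr₂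
  have hr₁0 : 0 ≤ r₁ := Real.sqrt_nonneg _
  have hr₂0 : 0 < r₂ := Real.sqrt_pos.mpr ht₂0
  have hr₁₂ : r₁ ≤ r₂ := Real.sqrt_le_sqrt ht₁₂
  have hr₁sq : r₁ ^ 2 = t₁ := Real.sq_sqrt ht₁0
  have hr₂sq : r₂ ^ 2 = t₂ := Real.sq_sqrt ht₂0.le
  -- the radial functions
  set Q : ℝ → ℝ := fun r => 1 + 8 * (m - 1) * r ^ 2 * (m * r ^ 2 - 1) with hQdef
  set f : ℝ → ℝ := fun r => r * Real.exp (-(2 * m * r ^ 2)) * Q r with hfdef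
  set g : ℝ → ℝ := fun r => r * Real.exp (-(2 * m * r ^ 2)) * |Q r| with hgdef
  set φ : ℝ → ℝ := fun r =>
    -(Real.exp (-(2 * m * r ^ 2)) * (2 * (m - 1) * r ^ 4 + 1 / (4 * m))) with hφdef
  -- factorization of Q
  have hQfac : ∀ r : ℝ, Q r = 8 * m * (m - 1) * (r ^ 2 - t₁) * (r ^ 2 - t₂) := by
    intro r
    rw [hQdef, ht₁, ht₂]
    have h := hd2
    field_simp
    linear_combination 4 * h
  -- derivative
  have hφ : ∀ r : ℝ, HasDerivAt φ (f r) r := by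
    intro r
    have h1 : HasDerivAt (fun r : ℝ => -(2 * m * r ^ 2)) (-(4 * m * r)) r := by
      have := ((hasDerivAt_pow 2 r).const_mul (2 * m)).neg
      exact this.congr_deriv (by ring)
    have h2 := h1.exp
    have h3 : HasDerivAt (fun r : ℝ => 2 * (m - 1) * r ^ 4 + 1 / (4 * m))
        (8 * (m - 1) * r ^ 3) r := by
      have := ((hasDerivAt_pow 4 r).const_mul (2 * (m - 1))).add_const (1 / (4 * m))
      simpa using this.congr_deriv (by ring)
    have h4 := (h2.mul h3).neg
    refine h4.congr_deriv ?_
    symm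
    rw [hfdef, hQdef]
    field_simp
    ring
  -- continuity
  have hQc : Continuous Q := by rw [hQdef]; fun_prop
  have hfc : Continuous f := by rw [hfdef]; fun_prop
  have hgc : Continuous g := by
    rw [hgdef]; exact (continuous_id.mul (by fun_prop)).mul hQc.abs
  -- sign of Q
  have hsign1 : ∀ r ∈ Set.uIcc (0:ℝ) r₁, 0 ≤ Q r := by
    intro r hr
    rw [Set.uIcc_of_le hr₁0] at hr
    have h1 : r ^ 2 ≤ t₁ := by
      rw [← hr₁sq]; exact pow_le_pow_left₀ hr.1 hr.2 2
    have hab : (0:ℝ) ≤ (r ^ 2 - t₁) * (r ^ 2 - t₂) :=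
      by nlinarith [h1, h1.trans ht₁₂]
    calc (0:ℝ) ≤ (8 * m * (m - 1)) * ((r ^ 2 - t₁) * (r ^ 2 - t₂)) :=
          mul_nonneg (by positivity) hab
      _ = Q r := by rw [hQfac r]; ring
  have hsign2 : ∀ r ∈ Set.uIcc r₁ r₂, Q r ≤ 0 := by
    intro r hr
    rw [Set.uIcc_of_le hr₁₂] at hr
    have hrnn : 0 ≤ r := hr₁0.trans hr.1
    have h1 : t₁ ≤ r ^ 2 := by rw [← hr₁sq]; exact pow_le_pow_left₀ hr₁0 hr.1 2
    have h2 : r ^ 2 ≤ t₂ := by rw [← hr₂sq]; exact pow_le_pow_left₀ hrnn hr.2 2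
    have hab : (r ^ 2 - t₁) * (r ^ 2 - t₂) ≤ 0 :=
      mul_nonpos_of_nonneg_of_nonpos (by linarith) (by linarith)
    calc Q r = (8 * m * (m - 1)) * ((r ^ 2 - t₁) * (r ^ 2 - t₂)) := by rw [hQfac r]; ring
      _ ≤ 0 := mul_nonpos_of_nonneg_of_nonpos (by positivity) hab
  have hsign3 : ∀ r ∈ Set.Ioi r₂, 0 ≤ Q r := by
    intro r hr
    have hr' : r₂ ≤ r := (Set.mem_Ioi.mp hr).le
    have h2 : t₂ ≤ r ^ 2 := by rw [← hr₂sq]; exact pow_le_pow_left₀ hr₂0.le hr' 2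
    have hab : (0:ℝ) ≤ (r ^ 2 - t₁) * (r ^ 2 - t₂) :=
      mul_nonneg (by linarith [ht₁₂.trans h2]) (by linarith)
    calc (0:ℝ) ≤ (8 * m * (m - 1)) * ((r ^ 2 - t₁) * (r ^ 2 - t₂)) :=
          mul_nonneg (by positivity) hab
      _ = Q r := by rw [hQfac r]; ring
  -- tendsto of φ at top
  have hφtop : Tendsto φ atTop (nhds 0) := by
    have a1 := tendsto_pow_mul_exp_neg_atTop_nhds_zero 2
    have a2 := Real.tendsto_exp_neg_atTop_nhds_zero
    have h1 : Tendsto (fun u : ℝ =>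
        -((m - 1) / (2 * m ^ 2) * (u ^ 2 * Real.exp (-u)) + 1 / (4 * m) * Real.exp (-u)))
        atTop (nhds 0) := by
      have := ((a1.const_mul ((m - 1) / (2 * m ^ 2))).add (a2.const_mul (1 / (4 * m)))).neg
      simpa using this
    have h2 : Tendsto (fun r : ℝ => 2 * m * r ^ 2) atTop atTop :=
      (tendsto_pow_atTop two_ne_zero).const_mul_atTop (by positivity)
    apply (h1.comp h2).congr
    intro r
    simp only [Function.comp_apply, hφdef]
    field_simp
  -- tail integral
  have hf3nonneg : ∀ r ∈ Set.Ioi r₂, 0 ≤ f r := by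
    intro r hr
    have hrpos : 0 < r := hr₂0.trans hr
    exact mul_nonneg (mul_nonneg hrpos.le (Real.exp_pos _).le) (hsign3 r hr)
  have J3 : ∫ r in Set.Ioi r₂, f r = 0 - φ r₂ :=
    integral_Ioi_of_hasDerivAt_of_nonneg' (fun x _ => hφ x) hf3nonneg hφtop
  have J3int : IntegrableOn f (Set.Ioi r₂) :=
    integrableOn_Ioi_deriv_of_nonneg' (fun x _ => hφ x) hf3nonneg hφtop
  -- interval integrals
  have J1 : ∫ r in (0:ℝ)..r₁, f r = φ r₁ - φ 0 :=
    intervalIntegral.integral_eq_sub_of_hasDerivAt (fun x _ => hφ x)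
      (hfc.intervalIntegrable _ _)
  have J2 : ∫ r in r₁..r₂, f r = φ r₂ - φ r₁ :=
    intervalIntegral.integral_eq_sub_of_hasDerivAt (fun x _ => hφ x)
      (hfc.intervalIntegrable _ _)
  -- replace f by g on each piece
  have G1 : ∫ r in (0:ℝ)..r₁, g r = φ r₁ - φ 0 := by
    rw [← J1]
    apply intervalIntegral.integral_congr
    intro r hr
    rw [hgdef, hfdef]
    simp only [abs_of_nonneg (hsign1 r hr)]
  have G2 : ∫ r in r₁..r₂, g r = φ r₁ - φ r₂ := by
    have heq : ∫ r in r₁..r₂, g r = ∫ r in r₁..r₂, -(f r) := by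
      apply intervalIntegral.integral_congr
      intro r hr
      simp only [hgdef, hfdef]
      rw [abs_of_nonpos (hsign2 r hr)]
      ring
    rw [heq, intervalIntegral.integral_neg, J2]
    ring
  have G3 : ∫ r in Set.Ioi r₂, g r = 0 - φ r₂ := by
    rw [← J3]
    apply setIntegral_congr_fun measurableSet_Ioi
    intro r hr
    rw [hgdef, hfdef]
    simp only [abs_of_nonneg (hsign3 r hr)]
  have G3int : IntegrableOn g (Set.Ioi r₂) := by
    apply J3int.congr_fun ?_ measurableSet_Ioi
    intro r hr
    rw [hgdef, hfdef]
    simp only [abs_of_nonneg (hsign3 r hr)]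
  -- assemble K
  have hK : ∫ r in Set.Ioi (0:ℝ), g r = -(φ 0) + 2 * φ r₁ - 2 * φ r₂ := by
    rw [← Set.Ioc_union_Ioi_eq_Ioi hr₂0.le]
    rw [setIntegral_union Set.Ioc_disjoint_Ioi_same measurableSet_Ioi
      (hgc.integrableOn_Ioc) G3int]
    rw [← intervalIntegral.integral_of_le hr₂0.le]
    rw [← intervalIntegral.integral_add_adjacent_intervals
      (hgc.intervalIntegrable 0 r₁) (hgc.intervalIntegrable r₁ r₂)]
    rw [G1, G2, G3]
    ring
  -- polar coordinates
  have hpolar : (∫ p : ℝ × ℝ,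
      Real.exp (-(2 * m * (p.1 ^ 2 + p.2 ^ 2))) *
        |1 + 8 * (m - 1) * (p.1 ^ 2 + p.2 ^ 2) * (m * (p.1 ^ 2 + p.2 ^ 2) - 1)|) =
      (∫ r in Set.Ioi (0:ℝ), g r) * (2 * Real.pi) := by
    rw [← integral_comp_polarCoord_symm]
    have key : ∀ p : ℝ × ℝ, p.1 •
        (Real.exp (-(2 * m * ((polarCoord.symm p).1 ^ 2 + (polarCoord.symm p).2 ^ 2))) *
          |1 + 8 * (m - 1) * ((polarCoord.symm p).1 ^ 2 + (polarCoord.symm p).2 ^ 2) *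
            (m * ((polarCoord.symm p).1 ^ 2 + (polarCoord.symm p).2 ^ 2) - 1)|) =
        g p.1 * (fun _ : ℝ => (1:ℝ)) p.2 := by
      intro p
      have hs : (polarCoord.symm p).1 ^ 2 + (polarCoord.symm p).2 ^ 2 = p.1 ^ 2 := by
        rw [polarCoord_symm_apply]
        simp only
        linear_combination (p.1 ^ 2) * Real.sin_sq_add_cos_sq p.2
      rw [hs, smul_eq_mul, hgdef, hQdef]
      ring
    calc (∫ p in polarCoord.target, p.1 •
          (Real.exp (-(2 * m * ((polarCoord.symm p).1 ^ 2 + (polarCoord.symm p).2 ^ 2))) *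
          |1 + 8 * (m - 1) * ((polarCoord.symm p).1 ^ 2 + (polarCoord.symm p).2 ^ 2) *
            (m * ((polarCoord.symm p).1 ^ 2 + (polarCoord.symm p).2 ^ 2) - 1)|))
        = ∫ p in Set.Ioi (0:ℝ) ×ˢ Set.Ioo (-Real.pi) Real.pi,
            g p.1 * (fun _ : ℝ => (1:ℝ)) p.2 := by
          rw [polarCoord_target]
          exact setIntegral_congr_fun (measurableSet_Ioi.prod measurableSet_Ioo)
            (fun p _ => key p)
      _ = (∫ r in Set.Ioi (0:ℝ), g r) * ∫ θ in Set.Ioo (-Real.pi) Real.pi, (1:ℝ) := by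
          rw [Measure.volume_eq_prod]
          exact setIntegral_prod_mul (fun r => g r) (fun _ => (1:ℝ)) _ _
      _ = (∫ r in Set.Ioi (0:ℝ), g r) * (2 * Real.pi) := by
          rw [setIntegral_const, smul_eq_mul, mul_one, measureReal_def, Real.volume_Ioo,
            ENNReal.toReal_ofReal (by linarith [Real.pi_pos])]
          ring
  rw [hpolar, hK]
  -- final algebra
  set X := Real.exp d with hX
  set Y := Real.exp (-d) with hY
  set E := Real.exp 1 with hE
  have hsqrt : Real.sqrt (2 * (m - 2) * (m - 1)) = 2 * (m - 1) * d := by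
    rw [show 2 * (m - 2) * (m - 1) = (2 * (m - 1) * d) ^ 2 by nlinarith [hd2]]
    exact Real.sqrt_sq (by positivity)
  have hφ0 : φ 0 = -(1 / (4 * m)) := by simp [hφdef]
  have hA1 : 2 * (m - 1) * t₁ ^ 2 + 1 / (4 * m) = (m - 1) * (1 - d) / m ^ 2 := by
    rw [ht₁]; field_simp; linear_combination 2 * hd2
  have hA2 : 2 * (m - 1) * t₂ ^ 2 + 1 / (4 * m) = (m - 1) * (1 + d) / m ^ 2 := by
    rw [ht₂]; field_simp; linear_combination 2 * hd2
  have hφ1 : φ r₁ = -(X / E * ((m - 1) * (1 - d) / m ^ 2)) := by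
    simp only [hφdef]
    rw [show r₁ ^ 4 = (r₁ ^ 2) ^ 2 by ring, hr₁sq,
      show -(2 * m * t₁) = d - 1 by rw [ht₁]; field_simp; ring,
      Real.exp_sub, hA1, hX, hE]
  have hφ2 : φ r₂ = -(Y / E * ((m - 1) * (1 + d) / m ^ 2)) := by
    simp only [hφdef]
    rw [show r₂ ^ 4 = (r₂ ^ 2) ^ 2 by ring, hr₂sq,
      show -(2 * m * t₂) = -d - 1 by rw [ht₂]; field_simp; ring_nf,
      Real.exp_sub, hA2, hY, hE]
  rw [hφ0, hφ1, hφ2, Real.sinh_eq, Real.cosh_eq, hsqrt, ← hX, ← hY]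
  have hE0 : E ≠ 0 := Real.exp_ne_zero 1
  have hπ : Real.pi ≠ 0 := Real.pi_ne_zero
  field_simp
  ring
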